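/- Let G be a connected cubic simple graph with n vertices and m = 3n/2 edges, m even. Then the number of perfect matchings of the vertex-edge graph M(G) equals the number of perfect matchings of the line graph L(G) multiplied by 3^(n/4), i.e., p(M(G)) = p(L(G)) · 3^(n/4). -/

import Mathlib

variable {V : Type*}

/-- The vertex-edge graph (middle graph) of `G`: vertices are `V(G) ⊕ E(G)`;
two `e`-vertices are adjacent iff the corresponding edges of `G` are distinct and share
an endpoint; a `v`-vertex and an `e`-vertex are adjacent iff the vertex is an endpoint of
the edge; no two `v`-vertices are adjacent. -/
def middleGraph (G : SimpleGraph V) : SimpleGraph (V ⊕ G.edgeSet) where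
  Adj a b :=
    match a, b with
    | Sum.inl _, Sum.inl _ => False
    | Sum.inl u, Sum.inr e => u ∈ (e : Sym2 V)
    | Sum.inr e, Sum.inl u => u ∈ (e : Sym2 V)
    | Sum.inr e, Sum.inr f => e ≠ f ∧ ∃ v, v ∈ (e : Sym2 V) ∧ v ∈ (f : Sym2 V)
  symm := ⟨by
    rintro (u | e) (v | f) h
    · exact h.elim
    · exact h
    · exact h
    · exact ⟨h.1.symm, h.2.imp fun v hv => ⟨hv.2, hv.1⟩⟩⟩
  loopless := ⟨by
    rintro (u | e) h
    · exact h
    · exact h.1 rfl⟩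

/-- The line graph of `G`, with vertex set the edge set of `G`; two edges are adjacent
iff they are distinct and share an endpoint. -/
def lineGraph (G : SimpleGraph V) : SimpleGraph G.edgeSet where
  Adj e f := e ≠ f ∧ ∃ v, v ∈ (e : Sym2 V) ∧ v ∈ (f : Sym2 V)
  symm := ⟨by intro e f h; exact ⟨h.1.symm, h.2.imp fun v hv => ⟨hv.2, hv.1⟩⟩⟩
  loopless := ⟨by intro e h; exact h.1 rfl⟩

/-- `P` is a perfect matching (dimer covering) of `H`, viewed as a set of edges:
all members are edges of `H`, distinct members share no vertex, and every vertex of `H`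
lies in some member. -/
def IsPerfMatchSet {W : Type*} (H : SimpleGraph W) (P : Set (Sym2 W)) : Prop :=
  P ⊆ H.edgeSet ∧
  (∀ p ∈ P, ∀ q ∈ P, p ≠ q → ∀ a, a ∈ p → a ∉ q) ∧
  (∀ w : W, ∃ p ∈ P, w ∈ p)

/-- The number of perfect matchings (dimer coverings) of `H`. -/
noncomputable def pmCount {W : Type*} (H : SimpleGraph W) : ℕ :=
  {P : Set (Sym2 W) | IsPerfMatchSet H P}.ncard

/-! ### Generic helpers about perfect matchings -/

section Generic
variable {W : Type*} [DecidableEq W] {H : SimpleGraph W} {P : Set (Sym2 W)}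

noncomputable def pmPartner (h : IsPerfMatchSet H P) (w : W) : W :=
  Sym2.Mem.other' (h.2.2 w).choose_spec.2

lemma pmPartner_spec (h : IsPerfMatchSet H P) (w : W) : s(w, pmPartner h w) ∈ P := by
  have h1 := (h.2.2 w).choose_spec
  have h2 : s(w, pmPartner h w) = (h.2.2 w).choose := Sym2.other_spec' h1.2
  rw [h2]; exact h1.1

lemma pm_eq_of_mem (h : IsPerfMatchSet H P) {p : Sym2 W} (hp : p ∈ P) {w : W} (hw : w ∈ p) :
    p = s(w, pmPartner h w) := by
  by_contra hne
  exact h.2.1 p hp _ (pmPartner_spec h w) hne w hw (Sym2.mem_mk_left _ _)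

lemma pmPartner_adj (h : IsPerfMatchSet H P) (w : W) : H.Adj w (pmPartner h w) := by
  have := h.1 (pmPartner_spec h w); rwa [SimpleGraph.mem_edgeSet] at this

lemma pmPartner_ne (h : IsPerfMatchSet H P) (w : W) : pmPartner h w ≠ w :=
  (pmPartner_adj h w).ne'

lemma pmPartner_eq_of_mem (h : IsPerfMatchSet H P) {w u : W} (hm : s(w, u) ∈ P) :
    pmPartner h w = u := by
  have := pm_eq_of_mem h hm (Sym2.mem_mk_left w u)
  exact (Sym2.congr_right.1 this.symm)

lemma pmPartner_partner (h : IsPerfMatchSet H P) (w : W) :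
    pmPartner h (pmPartner h w) = w := by
  have hm : s(pmPartner h w, w) ∈ P := by rw [Sym2.eq_swap]; exact pmPartner_spec h w
  exact pmPartner_eq_of_mem h hm

end Generic

/-! ### Sym2 helper -/

lemma sym2_eq_of_two_mem {α : Type*} {u w : α} {e f : Sym2 α} (hne : u ≠ w)
    (h1 : u ∈ e) (h2 : w ∈ e) (h3 : u ∈ f) (h4 : w ∈ f) : e = f := by
  rw [(Sym2.mem_and_mem_iff hne).1 ⟨h1, h2⟩, (Sym2.mem_and_mem_iff hne).1 ⟨h3, h4⟩]

section Main
variable [Fintype V] [DecidableEq V] {G : SimpleGraph V} [DecidableRel G.Adj]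

/-- common vertex of two distinct edges is unique -/
lemma common_unique {e f : G.edgeSet} (hne : e ≠ f) {v v' : V}
    (h1 : v ∈ (e : Sym2 V)) (h2 : v ∈ (f : Sym2 V)) (h3 : v' ∈ (e : Sym2 V))
    (h4 : v' ∈ (f : Sym2 V)) : v = v' := by
  by_contra hvv
  exact hne (Subtype.ext (sym2_eq_of_two_mem hvv h1 h3 h2 h4))

variable (G)

def indeg (ω : G.edgeSet → V) (v : V) : ℕ :=
  (Finset.univ.filter fun e => ω e = v).card

lemma card_filter_mem (v : V) :
    (Finset.univ.filter fun e : G.edgeSet => v ∈ (e : Sym2 V)).card = G.degree v := by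
  classical
  rw [← SimpleGraph.card_incidenceFinset_eq_degree]
  refine Finset.card_nbij (fun e => (e : Sym2 V)) ?_ ?_ ?_
  · intro e he
    rw [Finset.mem_coe, SimpleGraph.mem_incidenceFinset]
    exact ⟨e.2, (Finset.mem_filter.1 (Finset.mem_coe.1 he)).2⟩
  · intro e _ f _ hef
    exact Subtype.ext hef
  · intro e he
    rw [Finset.mem_coe, SimpleGraph.mem_incidenceFinset] at he
    exact ⟨⟨e, he.1⟩, Finset.mem_coe.2 (Finset.mem_filter.2 ⟨Finset.mem_univ _, he.2⟩), rfl⟩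

variable {G}

lemma four_edges_false (hcubic : G.IsRegularOfDegree 3) {v : V} {a b c d : G.edgeSet}
    (hab : a ≠ b) (hac : a ≠ c) (had : a ≠ d) (hbc : b ≠ c) (hbd : b ≠ d) (hcd : c ≠ d)
    (ha : v ∈ (a : Sym2 V)) (hb : v ∈ (b : Sym2 V)) (hc : v ∈ (c : Sym2 V))
    (hd : v ∈ (d : Sym2 V)) : False := by
  classical
  have hsub : ({a, b, c, d} : Finset G.edgeSet) ⊆
      Finset.univ.filter fun e : G.edgeSet => v ∈ (e : Sym2 V) := by
    intro x hx
    simp only [Finset.mem_insert, Finset.mem_singleton] at hx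
    rcases hx with rfl | rfl | rfl | rfl <;>
      exact Finset.mem_filter.2 ⟨Finset.mem_univ _, by assumption⟩
  have hcard : ({a, b, c, d} : Finset G.edgeSet).card = 4 := by
    rw [Finset.card_insert_of_notMem (by simp [hab, hac, had]),
      Finset.card_insert_of_notMem (by simp [hbc, hbd]),
      Finset.card_pair hcd]
  have := Finset.card_le_card hsub
  rw [hcard, card_filter_mem G v, hcubic v] at this
  omega

end Main

/-! ### Line graph side -/

section LSide
variable [Fintype V] [DecidableEq V] {G : SimpleGraph V} [DecidableRel G.Adj]

lemma lineGraph_adj {e f : G.edgeSet} :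
    (lineGraph G).Adj e f ↔ e ≠ f ∧ ∃ v, v ∈ (e : Sym2 V) ∧ v ∈ (f : Sym2 V) := Iff.rfl

variable {P : Set (Sym2 G.edgeSet)}

noncomputable def lVert (h : IsPerfMatchSet (lineGraph G) P) (e : G.edgeSet) : V :=
  (lineGraph_adj.1 (pmPartner_adj h e)).2.choose

lemma lVert_mem_left (h : IsPerfMatchSet (lineGraph G) P) (e : G.edgeSet) :
    lVert h e ∈ (e : Sym2 V) :=
  (lineGraph_adj.1 (pmPartner_adj h e)).2.choose_spec.1

lemma lVert_mem_partner (h : IsPerfMatchSet (lineGraph G) P) (e : G.edgeSet) :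
    lVert h e ∈ ((pmPartner h e : G.edgeSet) : Sym2 V) :=
  (lineGraph_adj.1 (pmPartner_adj h e)).2.choose_spec.2

lemma lVert_eq_of_mem (h : IsPerfMatchSet (lineGraph G) P) {e f : G.edgeSet}
    (hm : s(e, f) ∈ P) {v : V} (hv : v ∈ (e : Sym2 V)) (hvf : v ∈ (f : Sym2 V)) :
    lVert h e = v := by
  have hadj : (lineGraph G).Adj e f := ((lineGraph G).mem_edgeSet).1 (h.1 hm)
  have hef : e ≠ f := (lineGraph_adj.1 hadj).1
  have hp : pmPartner h e = f := pmPartner_eq_of_mem h hm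
  refine common_unique hef (lVert_mem_left h e) ?_ hv hvf
  rw [← hp]; exact lVert_mem_partner h e

lemma lVert_partner (h : IsPerfMatchSet (lineGraph G) P) (e : G.edgeSet) :
    lVert h (pmPartner h e) = lVert h e := by
  have hm : s(pmPartner h e, e) ∈ P := by rw [Sym2.eq_swap]; exact pmPartner_spec h e
  exact lVert_eq_of_mem h hm (lVert_mem_partner h e) (lVert_mem_left h e)

lemma lVert_indeg (hcubic : G.IsRegularOfDegree 3) (h : IsPerfMatchSet (lineGraph G) P)
    (v : V) : indeg G (lVert h) v = 0 ∨ indeg G (lVert h) v = 2 := by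
  classical
  set S := Finset.univ.filter fun e : G.edgeSet => lVert h e = v with hS
  rcases S.eq_empty_or_nonempty with hemp | ⟨e, he⟩
  · left; simp [indeg, ← hS, hemp]
  · right
    have hev : lVert h e = v := (Finset.mem_filter.1 he).2
    have hpe : lVert h (pmPartner h e) = v := by rw [lVert_partner h e]; exact hev
    have hpeS : pmPartner h e ∈ S := Finset.mem_filter.2 ⟨Finset.mem_univ _, hpe⟩
    have hSeq : S = {e, pmPartner h e} := by
      apply Finset.Subset.antisymm
      · intro g hg
        simp only [Finset.mem_insert, Finset.mem_singleton]
        by_contra hcon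
        push_neg at hcon
        obtain ⟨hge, hgpe⟩ := hcon
        have hgv : lVert h g = v := (Finset.mem_filter.1 hg).2
        have hpgv : lVert h (pmPartner h g) = v := by rw [lVert_partner h g]; exact hgv
        refine four_edges_false hcubic (v := v) (a := e) (b := pmPartner h e) (c := g)
          (d := pmPartner h g) (pmPartner_ne h e).symm (Ne.symm hge) ?_ (Ne.symm hgpe) ?_
          (pmPartner_ne h g).symm ?_ ?_ ?_ ?_
        · intro hcon2
          have : pmPartner h e = g := by rw [hcon2, pmPartner_partner]
          exact hgpe this.symm
        · intro hcon2
          have : e = g := by rw [← pmPartner_partner h e, hcon2, pmPartner_partner]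
          exact hge this.symm
        · rw [← hev]; exact lVert_mem_left h e
        · rw [← hpe]; exact lVert_mem_left h (pmPartner h e)
        · rw [← hgv]; exact lVert_mem_left h g
        · rw [← hpgv]; exact lVert_mem_left h (pmPartner h g)
      · intro g hg
        simp only [Finset.mem_insert, Finset.mem_singleton] at hg
        rcases hg with rfl | rfl
        · exact he
        · exact hpeS
    show S.card = 2
    rw [hSeq]
    exact Finset.card_pair (pmPartner_ne h e).symm

def mkPML (ω : G.edgeSet → V) : Set (Sym2 G.edgeSet) :=
  {p | ∃ e f : G.edgeSet, p = s(e, f) ∧ e ≠ f ∧ ω e = ω f}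

lemma mkPML_rep {ω : G.edgeSet → V} {p : Sym2 G.edgeSet} (hp : p ∈ mkPML ω)
    {a : G.edgeSet} (ha : a ∈ p) : ∃ y, p = s(a, y) ∧ a ≠ y ∧ ω a = ω y := by
  obtain ⟨e, f, rfl, hef, hw⟩ := hp
  rcases Sym2.mem_iff.1 ha with rfl | rfl
  · exact ⟨f, rfl, hef, hw⟩
  · exact ⟨e, Sym2.eq_swap, hef.symm, hw.symm⟩

/-- the unique other in-edge at a vertex of in-degree 2 -/
lemma erase_singleton_of_indeg_two {ω : G.edgeSet → V} {v : V} (hdeg : indeg G ω v = 2)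
    {e : G.edgeSet} (he : ω e = v) :
    ∃ f, (Finset.univ.filter fun g : G.edgeSet => ω g = v).erase e = {f} := by
  classical
  rw [← Finset.card_eq_one, Finset.card_erase_of_mem
    (show e ∈ Finset.univ.filter (fun g : G.edgeSet => ω g = v) from
      Finset.mem_filter.2 ⟨Finset.mem_univ _, he⟩)]
  rw [show (Finset.univ.filter fun g : G.edgeSet => ω g = v).card = indeg G ω v from rfl, hdeg]

lemma mkPML_isPM {ω : G.edgeSet → V} (hor : ∀ e : G.edgeSet, ω e ∈ (e : Sym2 V))
    (hdeg : ∀ v, indeg G ω v = 0 ∨ indeg G ω v = 2) :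
    IsPerfMatchSet (lineGraph G) (mkPML ω) := by
  classical
  refine ⟨?_, ?_, ?_⟩
  · rintro p ⟨e, f, rfl, hne, hvv⟩
    rw [SimpleGraph.mem_edgeSet]
    exact ⟨hne, ω e, hor e, hvv ▸ hor f⟩
  · intro p hp q hq hpq a hap haq
    obtain ⟨y, rfl, hay, hwy⟩ := mkPML_rep hp hap
    obtain ⟨y', hq', hay', hwy'⟩ := mkPML_rep hq haq
    have hdeg2 : indeg G ω (ω a) = 2 := by
      rcases hdeg (ω a) with h0 | h2
      · exfalso
        have : a ∈ Finset.univ.filter fun g : G.edgeSet => ω g = ω a :=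
          Finset.mem_filter.2 ⟨Finset.mem_univ _, rfl⟩
        have := Finset.card_pos.2 ⟨a, this⟩
        rw [show (Finset.univ.filter fun g : G.edgeSet => ω g = ω a).card
          = indeg G ω (ω a) from rfl, h0] at this
        omega
      · exact h2
    obtain ⟨g, hg⟩ := erase_singleton_of_indeg_two hdeg2 (rfl : ω a = ω a)
    have hyg : y = g := by
      have : y ∈ (Finset.univ.filter fun g : G.edgeSet => ω g = ω a).erase a :=
        Finset.mem_erase.2 ⟨(Ne.symm hay), Finset.mem_filter.2 ⟨Finset.mem_univ _, hwy.symm⟩⟩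
      rw [hg] at this; exact Finset.mem_singleton.1 this
    have hy'g : y' = g := by
      have : y' ∈ (Finset.univ.filter fun g : G.edgeSet => ω g = ω a).erase a :=
        Finset.mem_erase.2 ⟨(Ne.symm hay'), Finset.mem_filter.2 ⟨Finset.mem_univ _, hwy'.symm⟩⟩
      rw [hg] at this; exact Finset.mem_singleton.1 this
    exact hpq (by rw [hq', hyg, hy'g])
  · intro e
    have hdeg2 : indeg G ω (ω e) = 2 := by
      rcases hdeg (ω e) with h0 | h2
      · exfalso
        have : e ∈ Finset.univ.filter fun g : G.edgeSet => ω g = ω e :=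
          Finset.mem_filter.2 ⟨Finset.mem_univ _, rfl⟩
        have := Finset.card_pos.2 ⟨e, this⟩
        rw [show (Finset.univ.filter fun g : G.edgeSet => ω g = ω e).card
          = indeg G ω (ω e) from rfl, h0] at this
        omega
      · exact h2
    obtain ⟨f, hf⟩ := erase_singleton_of_indeg_two hdeg2 (rfl : ω e = ω e)
    have hfmem : f ∈ (Finset.univ.filter fun g : G.edgeSet => ω g = ω e).erase e := by
      rw [hf]; exact Finset.mem_singleton_self f
    obtain ⟨hfe, hfS⟩ := Finset.mem_erase.1 hfmem
    exact ⟨s(e, f), ⟨e, f, rfl, Ne.symm hfe, ((Finset.mem_filter.1 hfS).2).symm⟩,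
      Sym2.mem_mk_left _ _⟩

lemma lVert_mkPML {ω : G.edgeSet → V} (hor : ∀ e : G.edgeSet, ω e ∈ (e : Sym2 V))
    (h : IsPerfMatchSet (lineGraph G) (mkPML ω)) : lVert h = ω := by
  funext e
  obtain ⟨y, hrep, hey, hw⟩ := mkPML_rep (pmPartner_spec h e) (Sym2.mem_mk_left e _)
  have hmem : s(e, y) ∈ mkPML ω := hrep ▸ pmPartner_spec h e
  exact lVert_eq_of_mem h hmem (hor e) (hw ▸ hor y)

lemma pm_eq_mkPML (hcubic : G.IsRegularOfDegree 3)
    (h : IsPerfMatchSet (lineGraph G) P) : P = mkPML (lVert h) := by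
  classical
  apply Set.Subset.antisymm
  · intro p hp
    induction p using Sym2.inductionOn with
    | hf e f =>
      have hadj : (lineGraph G).Adj e f := ((lineGraph G).mem_edgeSet).1 (h.1 hp)
      obtain ⟨hef, v, hv, hvf⟩ := lineGraph_adj.1 hadj
      have h1 : lVert h e = v := lVert_eq_of_mem h hp hv hvf
      have h2 : lVert h f = v := lVert_eq_of_mem h (Sym2.eq_swap ▸ hp) hvf hv
      exact ⟨e, f, rfl, hef, by rw [h1, h2]⟩
  · rintro p ⟨e, f, rfl, hef, hw⟩
    have hdeg2 : indeg G (lVert h) (lVert h e) = 2 := by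
      rcases lVert_indeg hcubic h (lVert h e) with h0 | h2
      · exfalso
        have : e ∈ Finset.univ.filter fun g : G.edgeSet => lVert h g = lVert h e :=
          Finset.mem_filter.2 ⟨Finset.mem_univ _, rfl⟩
        have := Finset.card_pos.2 ⟨e, this⟩
        rw [show (Finset.univ.filter fun g : G.edgeSet => lVert h g = lVert h e).card
          = indeg G (lVert h) (lVert h e) from rfl, h0] at this
        omega
      · exact h2
    obtain ⟨g, hg⟩ := erase_singleton_of_indeg_two hdeg2 (rfl : lVert h e = lVert h e)
    have hfg : f = g := by
      have : f ∈ (Finset.univ.filter fun x : G.edgeSet => lVert h x = lVert h e).erase e :=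
        Finset.mem_erase.2 ⟨Ne.symm hef, Finset.mem_filter.2 ⟨Finset.mem_univ _, hw.symm⟩⟩
      rw [hg] at this; exact Finset.mem_singleton.1 this
    have hpg : pmPartner h e = g := by
      have : pmPartner h e ∈
          (Finset.univ.filter fun x : G.edgeSet => lVert h x = lVert h e).erase e :=
        Finset.mem_erase.2 ⟨pmPartner_ne h e,
          Finset.mem_filter.2 ⟨Finset.mem_univ _, lVert_partner h e⟩⟩
      rw [hg] at this; exact Finset.mem_singleton.1 this
    rw [hfg, ← hpg]
    exact pmPartner_spec h e

end LSide

/-! ### Middle graph side -/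

section MSide
variable [Fintype V] [DecidableEq V] {G : SimpleGraph V} [DecidableRel G.Adj]

lemma mg_adj_inl_inr {v : V} {e : G.edgeSet} :
    (middleGraph G).Adj (Sum.inl v) (Sum.inr e) ↔ v ∈ (e : Sym2 V) := Iff.rfl

lemma mg_adj_inr_inr {e f : G.edgeSet} :
    (middleGraph G).Adj (Sum.inr e) (Sum.inr f) ↔
      e ≠ f ∧ ∃ v, v ∈ (e : Sym2 V) ∧ v ∈ (f : Sym2 V) := Iff.rfl

variable {P : Set (Sym2 (V ⊕ G.edgeSet))}

lemma mSigma_exists (h : IsPerfMatchSet (middleGraph G) P) (v : V) :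
    ∃ e : G.edgeSet, pmPartner h (Sum.inl v) = Sum.inr e := by
  cases hp : pmPartner h (Sum.inl v) with
  | inl u =>
    exfalso
    have := pmPartner_adj h (Sum.inl v)
    rw [hp] at this
    exact this
  | inr e => exact ⟨e, rfl⟩

noncomputable def mSigma (h : IsPerfMatchSet (middleGraph G) P) (v : V) : G.edgeSet :=
  (mSigma_exists h v).choose

lemma mSigma_spec (h : IsPerfMatchSet (middleGraph G) P) (v : V) :
    pmPartner h (Sum.inl v) = Sum.inr (mSigma h v) :=
  (mSigma_exists h v).choose_spec

lemma mSigma_mem_P (h : IsPerfMatchSet (middleGraph G) P) (v : V) :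
    s(Sum.inl v, Sum.inr (mSigma h v)) ∈ P := by
  rw [show (Sum.inr (mSigma h v) : V ⊕ G.edgeSet) = pmPartner h (Sum.inl v) from
    (mSigma_spec h v).symm]
  exact pmPartner_spec h (Sum.inl v)

lemma mSigma_eq_of_mem (h : IsPerfMatchSet (middleGraph G) P) {v : V} {e : G.edgeSet}
    (hm : s(Sum.inl v, Sum.inr e) ∈ P) : mSigma h v = e := by
  have := pmPartner_eq_of_mem h hm
  rw [mSigma_spec h v] at this
  exact Sum.inr_injective this

lemma mPartner_sigma (h : IsPerfMatchSet (middleGraph G) P) (v : V) :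
    pmPartner h (Sum.inr (mSigma h v)) = Sum.inl v := by
  rw [← mSigma_spec h v, pmPartner_partner]

lemma mVert_exu (h : IsPerfMatchSet (middleGraph G) P) (e : G.edgeSet) :
    ∃! v : V, v ∈ (e : Sym2 V) ∧
      (pmPartner h (Sum.inr e) = Sum.inl v ∨
       ∃ f : G.edgeSet, pmPartner h (Sum.inr e) = Sum.inr f ∧ v ∈ (f : Sym2 V)) := by
  cases hp : pmPartner h (Sum.inr e) with
  | inl u =>
    have hadj := pmPartner_adj h (Sum.inr e)
    rw [hp] at hadj
    have hue : u ∈ (e : Sym2 V) := hadj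
    refine ⟨u, ⟨hue, Or.inl rfl⟩, ?_⟩
    rintro v ⟨hv, heq | ⟨f, hf, _⟩⟩
    · exact (Sum.inl_injective heq).symm
    · exact absurd hf (by simp)
  | inr f =>
    have hadj := pmPartner_adj h (Sum.inr e)
    rw [hp] at hadj
    obtain ⟨hef, v, hv, hvf⟩ := (mg_adj_inr_inr).1 hadj
    have hef' : e ≠ f := fun hc => hef (by rw [hc])
    refine ⟨v, ⟨hv, Or.inr ⟨f, rfl, hvf⟩⟩, ?_⟩
    rintro v' ⟨hv', heq | ⟨f', hf', hvf'⟩⟩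
    · exact absurd heq (by simp)
    · have : f = f' := Sum.inr_injective hf'
      subst this
      exact common_unique hef' hv' hvf' hv hvf

noncomputable def mVert (h : IsPerfMatchSet (middleGraph G) P) (e : G.edgeSet) : V :=
  (mVert_exu h e).exists.choose

lemma mVert_spec (h : IsPerfMatchSet (middleGraph G) P) (e : G.edgeSet) :
    mVert h e ∈ (e : Sym2 V) ∧
      (pmPartner h (Sum.inr e) = Sum.inl (mVert h e) ∨
       ∃ f : G.edgeSet, pmPartner h (Sum.inr e) = Sum.inr f ∧ mVert h e ∈ (f : Sym2 V)) :=
  (mVert_exu h e).exists.choose_spec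

lemma mVert_mem (h : IsPerfMatchSet (middleGraph G) P) (e : G.edgeSet) :
    mVert h e ∈ (e : Sym2 V) := (mVert_spec h e).1

lemma mVert_eq (h : IsPerfMatchSet (middleGraph G) P) {e : G.edgeSet} {v : V}
    (hv : v ∈ (e : Sym2 V))
    (hc : pmPartner h (Sum.inr e) = Sum.inl v ∨
      ∃ f : G.edgeSet, pmPartner h (Sum.inr e) = Sum.inr f ∧ v ∈ (f : Sym2 V)) :
    mVert h e = v :=
  (mVert_exu h e).unique (mVert_spec h e) ⟨hv, hc⟩

lemma mVert_eq_of_inl_mem (h : IsPerfMatchSet (middleGraph G) P) {v : V} {e : G.edgeSet}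
    (hm : s(Sum.inl v, Sum.inr e) ∈ P) : mVert h e = v := by
  have hp : pmPartner h (Sum.inr e) = Sum.inl v :=
    pmPartner_eq_of_mem h (by rw [Sym2.eq_swap]; exact hm)
  have hv : v ∈ (e : Sym2 V) := (mg_adj_inl_inr).1 (((middleGraph G).mem_edgeSet).1 (h.1 hm))
  exact mVert_eq h hv (Or.inl hp)

lemma mVert_eq_of_inr_mem (h : IsPerfMatchSet (middleGraph G) P) {v : V} {e f : G.edgeSet}
    (hm : s(Sum.inr e, Sum.inr f) ∈ P) (hv : v ∈ (e : Sym2 V)) (hvf : v ∈ (f : Sym2 V)) :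
    mVert h e = v :=
  mVert_eq h hv (Or.inr ⟨f, pmPartner_eq_of_mem h hm, hvf⟩)

lemma mVert_sigma (h : IsPerfMatchSet (middleGraph G) P) (v : V) :
    mVert h (mSigma h v) = v :=
  mVert_eq_of_inl_mem h (mSigma_mem_P h v)

lemma mPartner_of_ne_sigma (h : IsPerfMatchSet (middleGraph G) P) {e : G.edgeSet}
    (hne : e ≠ mSigma h (mVert h e)) :
    ∃ f : G.edgeSet, pmPartner h (Sum.inr e) = Sum.inr f ∧ f ≠ e ∧
      mVert h f = mVert h e ∧ f ≠ mSigma h (mVert h e) := by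
  cases hp : pmPartner h (Sum.inr e) with
  | inl u =>
    exfalso
    have hadj := pmPartner_adj h (Sum.inr e)
    rw [hp] at hadj
    have hue : u ∈ (e : Sym2 V) := hadj
    have hveq : mVert h e = u := mVert_eq h hue (Or.inl hp)
    have : pmPartner h (Sum.inl u) = Sum.inr e := by rw [← hp, pmPartner_partner]
    have : mSigma h u = e := by
      have := mSigma_spec h u
      rw [‹pmPartner h (Sum.inl u) = Sum.inr e›] at this
      exact (Sum.inr_injective this).symm
    exact hne (by rw [hveq, this])
  | inr f =>
    have hadj := pmPartner_adj h (Sum.inr e)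
    rw [hp] at hadj
    obtain ⟨hef, v, hv, hvf⟩ := (mg_adj_inr_inr).1 hadj
    have hef' : e ≠ f := fun hc => hef (by rw [hc])
    have hve : mVert h e = v := mVert_eq h hv (Or.inr ⟨f, hp, hvf⟩)
    have hpf : pmPartner h (Sum.inr f) = Sum.inr e := by rw [← hp, pmPartner_partner]
    have hvff : mVert h f = v := mVert_eq h hvf (Or.inr ⟨e, hpf, hv⟩)
    refine ⟨f, rfl, hef'.symm, by rw [hve, hvff], ?_⟩
    intro hc
    have := mPartner_sigma h (mVert h e)
    rw [← hc, hpf] at this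
    exact absurd this (by simp)

lemma mVert_indeg (hcubic : G.IsRegularOfDegree 3) (h : IsPerfMatchSet (middleGraph G) P)
    (v : V) : indeg G (mVert h) v = 1 ∨ indeg G (mVert h) v = 3 := by
  classical
  set S := Finset.univ.filter fun e : G.edgeSet => mVert h e = v with hS
  have hσS : mSigma h v ∈ S := Finset.mem_filter.2 ⟨Finset.mem_univ _, mVert_sigma h v⟩
  by_cases hone : S = {mSigma h v}
  · left
    show S.card = 1
    rw [hone, Finset.card_singleton]
  · right
    have : ∃ e ∈ S, e ≠ mSigma h v := by
      by_contra hcon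
      push_neg at hcon
      exact hone (Finset.Subset.antisymm (fun g hg => Finset.mem_singleton.2 (hcon g hg))
        (fun g hg => (Finset.mem_singleton.1 hg) ▸ hσS))
    obtain ⟨e, heS, heσ⟩ := this
    have hev : mVert h e = v := (Finset.mem_filter.1 heS).2
    obtain ⟨f, _, hfe, hfv, hfσ⟩ := mPartner_of_ne_sigma h (e := e) (by rw [hev]; exact heσ)
    rw [hev] at hfv hfσ
    have hfS : f ∈ S := Finset.mem_filter.2 ⟨Finset.mem_univ _, hfv⟩
    have hSeq : S = {mSigma h v, e, f} := by
      apply Finset.Subset.antisymm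
      · intro g hg
        simp only [Finset.mem_insert, Finset.mem_singleton]
        by_contra hcon
        push_neg at hcon
        obtain ⟨hgσ, hge, hgf⟩ := hcon
        have hgv : mVert h g = v := (Finset.mem_filter.1 hg).2
        refine four_edges_false hcubic (v := v) (a := mSigma h v) (b := e) (c := f) (d := g)
          (Ne.symm heσ) (Ne.symm hfσ) (Ne.symm hgσ) hfe.symm (Ne.symm hge) (Ne.symm hgf)
          ?_ ?_ ?_ ?_
        · have := mVert_mem h (mSigma h v)
          rwa [mVert_sigma h v] at this
        · rw [← hev]; exact mVert_mem h e
        · rw [← hfv]; exact mVert_mem h f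
        · rw [← hgv]; exact mVert_mem h g
      · intro g hg
        simp only [Finset.mem_insert, Finset.mem_singleton] at hg
        rcases hg with rfl | rfl | rfl
        · exact hσS
        · exact heS
        · exact hfS
    show S.card = 3
    rw [hSeq, Finset.card_insert_of_notMem (by simp [Ne.symm heσ, Ne.symm hfσ]),
      Finset.card_insert_of_notMem (by simp [hfe.symm]), Finset.card_singleton]

end MSide

/-! ### mkPMM -/

section MSide2
variable [Fintype V] [DecidableEq V] {G : SimpleGraph V} [DecidableRel G.Adj]

lemma indeg_three_of_two {ω : G.edgeSet → V} {v : V}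
    (hdeg : ∀ v, indeg G ω v = 1 ∨ indeg G ω v = 3) {e₁ e₂ : G.edgeSet}
    (h1 : ω e₁ = v) (h2 : ω e₂ = v) (hne : e₁ ≠ e₂) : indeg G ω v = 3 := by
  classical
  rcases hdeg v with h | h
  · exfalso
    have hsub : ({e₁, e₂} : Finset G.edgeSet) ⊆
        Finset.univ.filter fun g : G.edgeSet => ω g = v := by
      intro x hx
      simp only [Finset.mem_insert, Finset.mem_singleton] at hx
      rcases hx with rfl | rfl <;> exact Finset.mem_filter.2 ⟨Finset.mem_univ _, by assumption⟩
    have := Finset.card_le_card hsub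
    rw [Finset.card_pair hne] at this
    rw [show (Finset.univ.filter fun g : G.edgeSet => ω g = v).card = indeg G ω v from rfl,
      h] at this
    omega
  · exact h

lemma third_singleton {ω : G.edgeSet → V} {v : V} (hdeg3 : indeg G ω v = 3)
    {e₁ e₂ : G.edgeSet} (h1 : ω e₁ = v) (h2 : ω e₂ = v) (hne : e₁ ≠ e₂) :
    ∃ f, ((Finset.univ.filter fun g : G.edgeSet => ω g = v).erase e₁).erase e₂ = {f} := by
  classical
  rw [← Finset.card_eq_one, Finset.card_erase_of_mem
    (Finset.mem_erase.2 ⟨Ne.symm hne,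
      show e₂ ∈ Finset.univ.filter (fun g : G.edgeSet => ω g = v) from
        Finset.mem_filter.2 ⟨Finset.mem_univ _, h2⟩⟩),
    Finset.card_erase_of_mem
    (show e₁ ∈ Finset.univ.filter (fun g : G.edgeSet => ω g = v) from
      Finset.mem_filter.2 ⟨Finset.mem_univ _, h1⟩)]
  rw [show (Finset.univ.filter fun g : G.edgeSet => ω g = v).card = indeg G ω v from rfl, hdeg3]

lemma mem_third {ω : G.edgeSet → V} {v : V} {e₁ e₂ x : G.edgeSet}
    (hx : ω x = v) (hx1 : x ≠ e₁) (hx2 : x ≠ e₂) {f : G.edgeSet}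
    (hf : ((Finset.univ.filter fun g : G.edgeSet => ω g = v).erase e₁).erase e₂ = {f}) :
    x = f := by
  classical
  have : x ∈ ((Finset.univ.filter fun g : G.edgeSet => ω g = v).erase e₁).erase e₂ :=
    Finset.mem_erase.2 ⟨hx2, Finset.mem_erase.2 ⟨hx1,
      Finset.mem_filter.2 ⟨Finset.mem_univ _, hx⟩⟩⟩
  rw [hf] at this
  exact Finset.mem_singleton.1 this

def mkPMM (ω : G.edgeSet → V) (σ : V → G.edgeSet) : Set (Sym2 (V ⊕ G.edgeSet)) :=
  {p | (∃ v, p = s(Sum.inl v, Sum.inr (σ v))) ∨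
    ∃ e f : G.edgeSet, p = s(Sum.inr e, Sum.inr f) ∧ e ≠ f ∧ ω e = ω f ∧
      e ≠ σ (ω e) ∧ f ≠ σ (ω f)}

variable {ω : G.edgeSet → V} {σ : V → G.edgeSet}

lemma mkPMM_rep (hσ : ∀ v, ω (σ v) = v) {p : Sym2 (V ⊕ G.edgeSet)} (hp : p ∈ mkPMM ω σ)
    {x : G.edgeSet} (hx : Sum.inr x ∈ p) (hxσ : x ≠ σ (ω x)) :
    ∃ y, p = s(Sum.inr x, Sum.inr y) ∧ x ≠ y ∧ ω x = ω y ∧ y ≠ σ (ω y) := by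
  rcases hp with ⟨v, rfl⟩ | ⟨e, f, rfl, hef, hw, heσ, hfσ⟩
  · rcases Sym2.mem_iff.1 hx with hc | hc
    · exact absurd hc (by simp)
    · exfalso
      have : x = σ v := Sum.inr_injective hc
      subst this
      exact hxσ (by rw [hσ v])
  · rcases Sym2.mem_iff.1 hx with hc | hc
    · have : x = e := Sum.inr_injective hc
      subst this
      exact ⟨f, rfl, hef, hw, hfσ⟩
    · have : x = f := Sum.inr_injective hc
      subst this
      exact ⟨e, Sym2.eq_swap, hef.symm, hw.symm, heσ⟩

lemma mkPMM_rep_sigma (hσ : ∀ v, ω (σ v) = v) {p : Sym2 (V ⊕ G.edgeSet)}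
    (hp : p ∈ mkPMM ω σ) {x : G.edgeSet} (hx : Sum.inr x ∈ p) (hxσ : x = σ (ω x)) :
    p = s(Sum.inl (ω x), Sum.inr x) := by
  rcases hp with ⟨v, rfl⟩ | ⟨e, f, rfl, hef, hw, heσ, hfσ⟩
  · rcases Sym2.mem_iff.1 hx with hc | hc
    · exact absurd hc (by simp)
    · have : x = σ v := Sum.inr_injective hc
      subst this
      rw [hσ v]
  · exfalso
    rcases Sym2.mem_iff.1 hx with hc | hc
    · have : x = e := Sum.inr_injective hc
      subst this
      exact heσ hxσ
    · have : x = f := Sum.inr_injective hc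
      subst this
      exact hfσ hxσ

lemma mkPMM_rep_inl {p : Sym2 (V ⊕ G.edgeSet)} (hp : p ∈ mkPMM ω σ) {v : V}
    (hv : Sum.inl v ∈ p) : p = s(Sum.inl v, Sum.inr (σ v)) := by
  rcases hp with ⟨v', rfl⟩ | ⟨e, f, rfl, _, _, _, _⟩
  · rcases Sym2.mem_iff.1 hv with hc | hc
    · rw [Sum.inl_injective hc]
    · exact absurd hc (by simp)
  · exfalso
    rcases Sym2.mem_iff.1 hv with hc | hc <;> exact absurd hc (by simp)

lemma mkPMM_isPM (hor : ∀ e : G.edgeSet, ω e ∈ (e : Sym2 V))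
    (hdeg : ∀ v, indeg G ω v = 1 ∨ indeg G ω v = 3) (hσ : ∀ v, ω (σ v) = v) :
    IsPerfMatchSet (middleGraph G) (mkPMM ω σ) := by
  classical
  have hσmem : ∀ v, v ∈ ((σ v : G.edgeSet) : Sym2 V) := fun v => by
    have := hor (σ v); rwa [hσ v] at this
  refine ⟨?_, ?_, ?_⟩
  · rintro p (⟨v, rfl⟩ | ⟨e, f, rfl, hef, hw, _, _⟩)
    · rw [SimpleGraph.mem_edgeSet]
      exact hσmem v
    · rw [SimpleGraph.mem_edgeSet]
      exact ⟨hef, ω e, hor e, hw ▸ hor f⟩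
  · intro p hp q hq hpq a hap haq
    cases a with
    | inl v =>
      exact hpq ((mkPMM_rep_inl hp hap).trans (mkPMM_rep_inl hq haq).symm)
    | inr x =>
      by_cases hxσ : x = σ (ω x)
      · exact hpq ((mkPMM_rep_sigma hσ hp hap hxσ).trans
          (mkPMM_rep_sigma hσ hq haq hxσ).symm)
      · obtain ⟨y, hpy, hxy, hwy, hyσ⟩ := mkPMM_rep hσ hp hap hxσ
        obtain ⟨y', hqy, hxy', hwy', hyσ'⟩ := mkPMM_rep hσ hq haq hxσ
        have hσx : ω (σ (ω x)) = ω x := hσ (ω x)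
        have hσne : σ (ω x) ≠ x := Ne.symm hxσ
        have hdeg3 : indeg G ω (ω x) = 3 :=
          indeg_three_of_two hdeg hσx rfl hσne
        obtain ⟨g, hg⟩ := third_singleton hdeg3 hσx rfl hσne
        have hyg : y = g := mem_third hwy.symm
          (fun hc => hyσ (by rw [← hwy]; exact hc)) (Ne.symm hxy) hg
        have hy'g : y' = g := mem_third hwy'.symm
          (fun hc => hyσ' (by rw [← hwy']; exact hc)) (Ne.symm hxy') hg
        exact hpq (by rw [hpy, hqy, hyg, hy'g])
  · intro w
    cases w with
    | inl v =>
      exact ⟨s(Sum.inl v, Sum.inr (σ v)), Or.inl ⟨v, rfl⟩, Sym2.mem_mk_left _ _⟩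
    | inr e =>
      by_cases heσ : e = σ (ω e)
      · refine ⟨s(Sum.inl (ω e), Sum.inr (σ (ω e))), Or.inl ⟨ω e, rfl⟩, ?_⟩
        rw [← heσ]
        exact Sym2.mem_mk_right _ _
      · have hσx : ω (σ (ω e)) = ω e := hσ (ω e)
        have hσne : σ (ω e) ≠ e := Ne.symm heσ
        have hdeg3 : indeg G ω (ω e) = 3 := indeg_three_of_two hdeg hσx rfl hσne
        obtain ⟨f, hf⟩ := third_singleton hdeg3 hσx rfl hσne
        have hfmem : f ∈ ((Finset.univ.filter fun g : G.edgeSet => ω g = ω e).erase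
            (σ (ω e))).erase e := by
          rw [hf]; exact Finset.mem_singleton_self f
        obtain ⟨hfe, hfrest⟩ := Finset.mem_erase.1 hfmem
        obtain ⟨hfσ, hfS⟩ := Finset.mem_erase.1 hfrest
        have hfv : ω f = ω e := (Finset.mem_filter.1 hfS).2
        refine ⟨s(Sum.inr e, Sum.inr f), Or.inr ⟨e, f, rfl, Ne.symm hfe, hfv.symm, heσ, ?_⟩,
          Sym2.mem_mk_left _ _⟩
        rw [hfv]
        exact hfσ
end MSide2

section MSide3
variable [Fintype V] [DecidableEq V] {G : SimpleGraph V} [DecidableRel G.Adj]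
variable {ω : G.edgeSet → V} {σ : V → G.edgeSet}

lemma mVert_mkPMM (hor : ∀ e : G.edgeSet, ω e ∈ (e : Sym2 V))
    (hdeg : ∀ v, indeg G ω v = 1 ∨ indeg G ω v = 3) (hσ : ∀ v, ω (σ v) = v)
    (h : IsPerfMatchSet (middleGraph G) (mkPMM ω σ)) : mVert h = ω := by
  classical
  funext e
  by_cases heσ : e = σ (ω e)
  · have hmem : s(Sum.inl (ω e), Sum.inr e) ∈ mkPMM ω σ := by
      refine Or.inl ⟨ω e, ?_⟩
      rw [← heσ]
    exact mVert_eq_of_inl_mem h hmem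
  · have hσx : ω (σ (ω e)) = ω e := hσ (ω e)
    have hσne : σ (ω e) ≠ e := Ne.symm heσ
    have hdeg3 : indeg G ω (ω e) = 3 := indeg_three_of_two hdeg hσx rfl hσne
    obtain ⟨f, hf⟩ := third_singleton hdeg3 hσx rfl hσne
    have hfmem : f ∈ ((Finset.univ.filter fun g : G.edgeSet => ω g = ω e).erase
        (σ (ω e))).erase e := by
      rw [hf]; exact Finset.mem_singleton_self f
    obtain ⟨hfe, hfrest⟩ := Finset.mem_erase.1 hfmem
    obtain ⟨hfσ, hfS⟩ := Finset.mem_erase.1 hfrest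
    have hfv : ω f = ω e := (Finset.mem_filter.1 hfS).2
    have hmem : s(Sum.inr e, Sum.inr f) ∈ mkPMM ω σ :=
      Or.inr ⟨e, f, rfl, Ne.symm hfe, hfv.symm, heσ, by rw [hfv]; exact hfσ⟩
    exact mVert_eq_of_inr_mem h hmem (hor e) (by rw [← hfv]; exact hor f)

lemma mSigma_mkPMM (hσ : ∀ v, ω (σ v) = v)
    (h : IsPerfMatchSet (middleGraph G) (mkPMM ω σ)) : mSigma h = σ := by
  funext v
  exact mSigma_eq_of_mem h (Or.inl ⟨v, rfl⟩)

lemma pm_eq_mkPMM (hcubic : G.IsRegularOfDegree 3) {P : Set (Sym2 (V ⊕ G.edgeSet))}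
    (h : IsPerfMatchSet (middleGraph G) P) : P = mkPMM (mVert h) (mSigma h) := by
  classical
  apply Set.Subset.antisymm
  · intro p hp
    induction p using Sym2.inductionOn with
    | hf a b =>
      cases a with
      | inl v =>
        cases b with
        | inl v' =>
          exact absurd (((middleGraph G).mem_edgeSet).1 (h.1 hp)) (by intro hc; exact hc)
        | inr e =>
          exact Or.inl ⟨v, by rw [mSigma_eq_of_mem h hp]⟩
      | inr e =>
        cases b with
        | inl v =>
          refine Or.inl ⟨v, ?_⟩
          rw [Sym2.eq_swap]
          rw [mSigma_eq_of_mem h (by rw [Sym2.eq_swap]; exact hp)]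
        | inr f =>
          have hadj := ((middleGraph G).mem_edgeSet).1 (h.1 hp)
          obtain ⟨hef, v, hv, hvf⟩ := (mg_adj_inr_inr).1 hadj
          have hve : mVert h e = v := mVert_eq_of_inr_mem h hp hv hvf
          have hvf' : mVert h f = v :=
            mVert_eq_of_inr_mem h (by rw [Sym2.eq_swap]; exact hp) hvf hv
          have heσ : e ≠ mSigma h (mVert h e) := by
            intro hc
            have h1 : pmPartner h (Sum.inr e) = Sum.inl (mVert h e) := by
              conv_lhs => rw [hc]
              exact mPartner_sigma h (mVert h e)
            have h2 : pmPartner h (Sum.inr e) = Sum.inr f := pmPartner_eq_of_mem h hp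
            rw [h1] at h2
            exact absurd h2 (by simp)
          have hfσ : f ≠ mSigma h (mVert h f) := by
            intro hc
            have h1 : pmPartner h (Sum.inr f) = Sum.inl (mVert h f) := by
              conv_lhs => rw [hc]
              exact mPartner_sigma h (mVert h f)
            have h2 : pmPartner h (Sum.inr f) = Sum.inr e :=
              pmPartner_eq_of_mem h (by rw [Sym2.eq_swap]; exact hp)
            rw [h1] at h2
            exact absurd h2 (by simp)
          exact Or.inr ⟨e, f, rfl, hef, by rw [hve, hvf'], heσ, hfσ⟩
  · rintro p (⟨v, rfl⟩ | ⟨e, f, rfl, hef, hw, heσ, hfσ⟩)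
    · exact mSigma_mem_P h v
    · set v := mVert h e with hv
      obtain ⟨g, hpg, hge, hgv, hgσ⟩ := mPartner_of_ne_sigma h (e := e) heσ
      have hmemP : s(Sum.inr e, Sum.inr g) ∈ P := by
        rw [show (Sum.inr g : V ⊕ G.edgeSet) = pmPartner h (Sum.inr e) from hpg.symm]
        exact pmPartner_spec h (Sum.inr e)
      have hσv : mVert h (mSigma h v) = v := mVert_sigma h v
      have hσe : mSigma h v ≠ e := by
        intro hc
        exact heσ (by rw [← hc])
      have hdeg3 : indeg G (mVert h) v = 3 :=
        indeg_three_of_two (mVert_indeg hcubic h) hσv rfl hσe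
      obtain ⟨t, ht⟩ := third_singleton hdeg3 hσv rfl hσe
      have hgt : g = t := mem_third (by rw [hv]; exact hgv) (by rw [hv]; exact hgσ) hge ht
      have hft : f = t := by
        refine mem_third ?_ ?_ (Ne.symm hef) ht
        · rw [← hw]
        · rw [← hw] at hfσ
          exact hfσ
      rw [hft, ← hgt]
      exact hmemP

end MSide3

/-! ### Counting -/

lemma card_eq_sum_fiber_card {A B : Type*} [Finite A] [Fintype B] (f : A → B) :
    Nat.card A = ∑ b : B, Nat.card {a : A // f a = b} := by
  classical
  have := Fintype.ofFinite A
  simp only [Nat.card_eq_fintype_card]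
  rw [← Fintype.card_congr (Equiv.sigmaFiberEquiv f)]
  exact Fintype.card_sigma

section Count
variable [Fintype V] [DecidableEq V] {G : SimpleGraph V} [DecidableRel G.Adj]

abbrev Orient13 (G : SimpleGraph V) [DecidableRel G.Adj] : Type _ :=
  {ω : G.edgeSet → V // (∀ e : G.edgeSet, ω e ∈ (e : Sym2 V)) ∧
    ∀ v, indeg G ω v = 1 ∨ indeg G ω v = 3}

abbrev Orient02 (G : SimpleGraph V) [DecidableRel G.Adj] : Type _ :=
  {ω : G.edgeSet → V // (∀ e : G.edgeSet, ω e ∈ (e : Sym2 V)) ∧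
    ∀ v, indeg G ω v = 0 ∨ indeg G ω v = 2}

noncomputable def extractM (hcubic : G.IsRegularOfDegree 3)
    (P : {P : Set (Sym2 (V ⊕ G.edgeSet)) // IsPerfMatchSet (middleGraph G) P}) :
    Orient13 G :=
  ⟨mVert P.2, fun e => mVert_mem P.2 e, mVert_indeg hcubic P.2⟩

noncomputable def extractL (hcubic : G.IsRegularOfDegree 3)
    (P : {P : Set (Sym2 G.edgeSet) // IsPerfMatchSet (lineGraph G) P}) :
    Orient02 G :=
  ⟨lVert P.2, fun e => lVert_mem_left P.2 e, lVert_indeg hcubic P.2⟩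

lemma extractL_bij (hcubic : G.IsRegularOfDegree 3) :
    Function.Bijective (extractL (G := G) hcubic) := by
  constructor
  · rintro ⟨P, hP⟩ ⟨Q, hQ⟩ hPQ
    have hval : lVert hP = lVert hQ := congrArg Subtype.val hPQ
    have h1 : P = mkPML (lVert hP) := pm_eq_mkPML hcubic hP
    have h2 : Q = mkPML (lVert hQ) := pm_eq_mkPML hcubic hQ
    exact Subtype.ext (show P = Q by rw [h1, h2, hval])
  · rintro ⟨ω, hor, hdeg⟩
    exact ⟨⟨mkPML ω, mkPML_isPM hor hdeg⟩, Subtype.ext (lVert_mkPML hor _)⟩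

lemma fiberM_card (hcubic : G.IsRegularOfDegree 3) (ω : Orient13 G) :
    Nat.card {P : {P : Set (Sym2 (V ⊕ G.edgeSet)) // IsPerfMatchSet (middleGraph G) P} //
      extractM hcubic P = ω} = ∏ v : V, indeg G ω.1 v := by
  classical
  have hbij : Function.Bijective
      (fun (P : {P : {P : Set (Sym2 (V ⊕ G.edgeSet)) //
          IsPerfMatchSet (middleGraph G) P} // extractM hcubic P = ω}) =>
        (⟨mSigma P.1.2, fun v => by
          have hval : mVert P.1.2 = ω.1 := congrArg Subtype.val P.2
          rw [← hval]
          exact mVert_sigma P.1.2 v⟩ : {σ : V → G.edgeSet // ∀ v, ω.1 (σ v) = v})) := by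
    constructor
    · rintro ⟨⟨P, hP⟩, hP2⟩ ⟨⟨Q, hQ⟩, hQ2⟩ hPQ
      have hσ : mSigma hP = mSigma hQ := congrArg Subtype.val hPQ
      have hvP : mVert hP = ω.1 := congrArg Subtype.val hP2
      have hvQ : mVert hQ = ω.1 := congrArg Subtype.val hQ2
      have h1 : P = mkPMM (mVert hP) (mSigma hP) := pm_eq_mkPMM hcubic hP
      have h2 : Q = mkPMM (mVert hQ) (mSigma hQ) := pm_eq_mkPMM hcubic hQ
      exact Subtype.ext (Subtype.ext (show P = Q by rw [h1, h2, hvP, hvQ, hσ]))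
    · rintro ⟨σ, hσ⟩
      have hPM : IsPerfMatchSet (middleGraph G) (mkPMM ω.1 σ) :=
        mkPMM_isPM ω.2.1 ω.2.2 hσ
      refine ⟨⟨⟨mkPMM ω.1 σ, hPM⟩, Subtype.ext (mVert_mkPMM ω.2.1 ω.2.2 hσ hPM)⟩, ?_⟩
      exact Subtype.ext (mSigma_mkPMM hσ hPM)
  rw [Nat.card_eq_of_bijective _ hbij]
  rw [Nat.card_congr (Equiv.subtypePiEquivPi (p := fun v (e : G.edgeSet) => ω.1 e = v))]
  rw [Nat.card_pi]
  congr 1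
  funext v
  rw [Nat.card_eq_fintype_card, Fintype.card_subtype]
  rfl

lemma prod_indeg (hcubic : G.IsRegularOfDegree 3) (ω : Orient13 G) :
    ∏ v : V, indeg G ω.1 v = 3 ^ (Fintype.card V / 4) := by
  classical
  set k := (Finset.univ.filter fun v => indeg G ω.1 v = 3).card with hk
  have hkle : k ≤ Fintype.card V := by
    rw [hk]
    exact (Finset.card_filter_le _ _).trans (by rw [Finset.card_univ])
  have hprod : ∏ v : V, indeg G ω.1 v = 3 ^ k := by
    rw [← Finset.prod_filter_mul_prod_filter_not Finset.univ (fun v => indeg G ω.1 v = 3)]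
    have h1 : ∏ v ∈ Finset.univ.filter (fun v => indeg G ω.1 v = 3), indeg G ω.1 v = 3 ^ k := by
      rw [Finset.prod_congr rfl (fun v hv => (Finset.mem_filter.1 hv).2),
        Finset.prod_const]
    have h2 : ∏ v ∈ Finset.univ.filter (fun v => ¬indeg G ω.1 v = 3), indeg G ω.1 v = 1 := by
      rw [Finset.prod_congr rfl (fun v hv => ?_), Finset.prod_const, one_pow]
      rcases ω.2.2 v with h | h
      · exact h
      · exact absurd h (Finset.mem_filter.1 hv).2
    rw [h1, h2, mul_one]
  have hsum : ∑ v : V, indeg G ω.1 v = Fintype.card G.edgeSet := by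
    rw [← Finset.card_univ]
    exact (Finset.card_eq_sum_card_fiberwise
      (f := ω.1) (s := Finset.univ) (t := Finset.univ) (fun x _ => Finset.mem_univ _)).symm
  have hsum2 : ∑ v : V, indeg G ω.1 v = 3 * k + (Fintype.card V - k) := by
    rw [← Finset.sum_filter_add_sum_filter_not Finset.univ (fun v => indeg G ω.1 v = 3)]
    have h1 : ∑ v ∈ Finset.univ.filter (fun v => indeg G ω.1 v = 3), indeg G ω.1 v = 3 * k := by
      rw [Finset.sum_congr rfl (fun v hv => (Finset.mem_filter.1 hv).2),
        Finset.sum_const, smul_eq_mul, mul_comm]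
    have h2 : ∑ v ∈ Finset.univ.filter (fun v => ¬indeg G ω.1 v = 3), indeg G ω.1 v
        = Fintype.card V - k := by
      have hadd := Finset.card_filter_add_card_filter_not
        (s := (Finset.univ : Finset V)) (p := fun v => indeg G ω.1 v = 3)
      rw [Finset.card_univ, ← hk] at hadd
      rw [Finset.sum_congr rfl (fun v hv => ?_), Finset.sum_const, smul_eq_mul, mul_one]
      · omega
      · rcases ω.2.2 v with h | h
        · exact h
        · exact absurd h (Finset.mem_filter.1 hv).2
    rw [h1, h2]
  have h2m : 2 * Fintype.card G.edgeSet = 3 * Fintype.card V := by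
    have := G.sum_degrees_eq_twice_card_edges
    rw [Finset.sum_congr rfl (fun v _ => hcubic v), Finset.sum_const, smul_eq_mul,
      Finset.card_univ, SimpleGraph.edgeFinset_card] at this
    omega
  have hk4 : k = Fintype.card V / 4 := by omega
  rw [hprod, hk4]

lemma indeg_add_indeg_rev (hcubic : G.IsRegularOfDegree 3) {ω : G.edgeSet → V}
    (hor : ∀ e : G.edgeSet, ω e ∈ (e : Sym2 V)) (v : V) :
    indeg G ω v + indeg G (fun e => Sym2.Mem.other' (hor e)) v = 3 := by
  classical
  have hne : ∀ e : G.edgeSet, Sym2.Mem.other' (hor e) ≠ ω e := fun e => by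
    rw [← Sym2.other_eq_other']
    exact Sym2.other_ne (G.not_isDiag_of_mem_edgeSet e.2) (hor e)
  have hdisj : Disjoint (Finset.univ.filter fun e : G.edgeSet => ω e = v)
      (Finset.univ.filter fun e : G.edgeSet => Sym2.Mem.other' (hor e) = v) := by
    rw [Finset.disjoint_filter]
    intro e _ h1 h2
    exact hne e (h2.trans h1.symm)
  have hunion : (Finset.univ.filter fun e : G.edgeSet => ω e = v) ∪
      (Finset.univ.filter fun e : G.edgeSet => Sym2.Mem.other' (hor e) = v)
      = Finset.univ.filter fun e : G.edgeSet => v ∈ (e : Sym2 V) := by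
    ext e
    simp only [Finset.mem_union, Finset.mem_filter, Finset.mem_univ, true_and]
    constructor
    · rintro (rfl | rfl)
      · exact hor e
      · exact Sym2.other_mem' (hor e)
    · intro hv
      have hspec := Sym2.other_spec' (hor e)
      rw [← hspec] at hv
      rcases Sym2.mem_iff.1 hv with rfl | rfl
      · exact Or.inl rfl
      · exact Or.inr rfl
  have := Finset.card_union_of_disjoint hdisj
  rw [hunion, card_filter_mem G v, hcubic v] at this
  exact this.symm

noncomputable def revEquiv (hcubic : G.IsRegularOfDegree 3) : Orient13 G ≃ Orient02 G where
  toFun ω := ⟨fun e => Sym2.Mem.other' (ω.2.1 e), fun e => Sym2.other_mem' (ω.2.1 e),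
    fun v => by
      have := indeg_add_indeg_rev hcubic ω.2.1 v
      rcases ω.2.2 v with h | h <;> omega⟩
  invFun ω := ⟨fun e => Sym2.Mem.other' (ω.2.1 e), fun e => Sym2.other_mem' (ω.2.1 e),
    fun v => by
      have := indeg_add_indeg_rev hcubic ω.2.1 v
      rcases ω.2.2 v with h | h <;> omega⟩
  left_inv ω := Subtype.ext (funext fun e => Sym2.other_invol' (ω.2.1 e) _)
  right_inv ω := Subtype.ext (funext fun e => Sym2.other_invol' (ω.2.1 e) _)

end Count

/-- Let `G` be a connected cubic graph with `n` vertices and an even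
number of edges.  Then `p(M(G)) = p(L(G)) · 3^(n/4)`. -/
theorem middle_graph_pm_eq_line_graph_pm_mul {V : Type*} [Fintype V] [DecidableEq V]
    (G : SimpleGraph V) [DecidableRel G.Adj]
    (hconn : G.Connected) (hcubic : G.IsRegularOfDegree 3)
    (heven : Even G.edgeFinset.card) :
    pmCount (middleGraph G) = pmCount (lineGraph G) * 3 ^ (Fintype.card V / 4) := by
  classical
  haveI := Fintype.ofFinite (Orient13 G)
  have hM : pmCount (middleGraph G) =
      Nat.card {P : Set (Sym2 (V ⊕ G.edgeSet)) // IsPerfMatchSet (middleGraph G) P} :=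
    (Nat.card_coe_set_eq _).symm
  have hL : pmCount (lineGraph G) =
      Nat.card {P : Set (Sym2 G.edgeSet) // IsPerfMatchSet (lineGraph G) P} :=
    (Nat.card_coe_set_eq _).symm
  rw [hM, hL, card_eq_sum_fiber_card (extractM (G := G) hcubic)]
  have hfib : ∀ ω : Orient13 G,
      Nat.card {P // extractM hcubic P = ω} = 3 ^ (Fintype.card V / 4) := fun ω => by
    rw [fiberM_card hcubic ω, prod_indeg hcubic ω]
  rw [Finset.sum_congr rfl (fun ω _ => hfib ω), Finset.sum_const, smul_eq_mul,
    Finset.card_univ]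
  congr 1
  rw [← Nat.card_eq_fintype_card (α := Orient13 G), Nat.card_congr (revEquiv (G := G) hcubic)]
  exact (Nat.card_eq_of_bijective _ (extractL_bij hcubic)).symm
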